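/- arXiv:0903.0147 — 2 statements merged into one kernel-verified Lean document; each statement's English description precedes it below -/
import Mathlib

section
/- Let n ≥ 1, p = 2n+1 an odd prime, and let ω ∈ ℂ be a root of θ_n. With X = [[-1,1],[0,1]], Y = [[-1,0],[ω,1]] over ℂ and (XY)^k = [[a_k, b_k],[c_k, d_k]], the following hold: (1) a_0 + a_1 + ⋯ + a_{2n} = 0; (2) b_1 + b_2 + ⋯ + b_{2n} = 0; (3) d_0 + d_1 + ⋯ + d_{2n} = 0; (4) a_n + 2·b_n = 0; (5) if k ≡ ℓ (mod p) then a_k = a_ℓ, b_k = b_ℓ, c_k = c_ℓ and d_k = d_ℓ. -/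
open Finset

/-- The coefficient `c_k^{(n)} = C(n+k,2k) + 2·C(n+k,2k+1)` of `θ_n`. -/
def thetaCoeff (n k : ℕ) : ℤ := ((n + k).choose (2 * k) : ℤ) + 2 * ((n + k).choose (2 * k + 1) : ℤ)

/-- The matrix `X = [[-1,1],[0,1]]` over `ℂ`. -/
noncomputable def Xmat : Matrix (Fin 2) (Fin 2) ℂ := !![-1, 1; 0, 1]

/-- The matrix `Y = [[-1,0],[ω,1]]` over `ℂ`. -/
noncomputable def Ymat (ω : ℂ) : Matrix (Fin 2) (Fin 2) ℂ := !![-1, 0; ω, 1]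

/-- `a_k`: the (1,1)-entry of `(XY)^k`. -/
noncomputable def aEnt (ω : ℂ) (k : ℕ) : ℂ := ((Xmat * Ymat ω) ^ k) 0 0

/-- `b_k`: the (1,2)-entry of `(XY)^k`. -/
noncomputable def bEnt (ω : ℂ) (k : ℕ) : ℂ := ((Xmat * Ymat ω) ^ k) 0 1

/-- `c_k`: the (2,1)-entry of `(XY)^k`. -/
noncomputable def cEnt (ω : ℂ) (k : ℕ) : ℂ := ((Xmat * Ymat ω) ^ k) 1 0

/-- `d_k`: the (2,2)-entry of `(XY)^k`. -/
noncomputable def dEnt (ω : ℂ) (k : ℕ) : ℂ := ((Xmat * Ymat ω) ^ k) 1 1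

/-- The Chebyshev-like sequence `s_0 = 0`, `s_1 = 1`, `s_{k+2} = (ω+2) s_{k+1} - s_k`. -/
noncomputable def sSeq (ω : ℂ) : ℕ → ℂ
  | 0 => 0
  | 1 => 1
  | (k+2) => (ω + 2) * sSeq ω (k+1) - sSeq ω k

lemma sSeq_rec (ω : ℂ) (k : ℕ) : sSeq ω (k+2) = (ω + 2) * sSeq ω (k+1) - sSeq ω k := rfl

lemma Mmat (ω : ℂ) : (Xmat * Ymat ω) = !![1+ω, 1; ω, 1] := by
  rw [Xmat, Ymat, Matrix.mul_fin_two]; norm_num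

lemma Mpow (ω : ℂ) (k : ℕ) : (Xmat * Ymat ω) ^ k =
    !![sSeq ω (k+1) - sSeq ω k, sSeq ω k;
       ω * sSeq ω k, sSeq ω (k+1) - (1+ω) * sSeq ω k] := by
  induction k with
  | zero => simp [sSeq, Matrix.one_fin_two]
  | succ k ih =>
    rw [pow_succ, ih, Mmat, Matrix.mul_fin_two, sSeq_rec]
    congr 1 <;> ring

lemma aEnt_eq (ω : ℂ) (k : ℕ) : aEnt ω k = sSeq ω (k+1) - sSeq ω k := by
  rw [aEnt, Mpow]; simp
lemma bEnt_eq (ω : ℂ) (k : ℕ) : bEnt ω k = sSeq ω k := by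
  rw [bEnt, Mpow]; simp
lemma dEnt_eq (ω : ℂ) (k : ℕ) : dEnt ω k = sSeq ω (k+1) - (1+ω) * sSeq ω k := by
  rw [dEnt, Mpow]; simp

lemma choose_id (m k : ℕ) :
    (m+3+k).choose (2*k+3) + (m+1+k).choose (2*k+3)
      = (m+1+k).choose (2*k+1) + 2 * (m+2+k).choose (2*k+3) := by
  have h1 : (m+3+k).choose (2*k+3) = (m+2+k).choose (2*k+2) + (m+2+k).choose (2*k+3) := by
    have := Nat.choose_succ_succ (m+2+k) (2*k+2)
    simpa [Nat.succ_eq_add_one, show m+2+k+1 = m+3+k by ring] using this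
  have h2 : (m+2+k).choose (2*k+2) = (m+1+k).choose (2*k+1) + (m+1+k).choose (2*k+2) := by
    have := Nat.choose_succ_succ (m+1+k) (2*k+1)
    simpa [Nat.succ_eq_add_one, show m+1+k+1 = m+2+k by ring] using this
  have h3 : (m+2+k).choose (2*k+3) = (m+1+k).choose (2*k+2) + (m+1+k).choose (2*k+3) := by
    have := Nat.choose_succ_succ (m+1+k) (2*k+2)
    simpa [Nat.succ_eq_add_one, show m+1+k+1 = m+2+k by ring] using this
  omega

lemma sClosed (ω : ℂ) : ∀ m, sSeq ω m = ∑ k ∈ range m, ((m+k).choose (2*k+1) : ℂ) * ω^k := by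
  intro m
  induction m using Nat.twoStepInduction with
  | zero => simp [sSeq]
  | one => simp [sSeq]
  | more m ih0 ih1 =>
    rw [sSeq_rec, ih0, ih1]
    set B := ∑ k ∈ range (m+1), ((m+1+k).choose (2*k+1) : ℂ) * ω^k with hB
    set C := ∑ k ∈ range m, ((m+k).choose (2*k+1) : ℂ) * ω^k with hC
    rw [Finset.sum_range_succ' (fun k => ((m+2+k).choose (2*k+1) : ℂ) * ω^k) (m+1)]
    have hbot : ∀ k ∈ range (m+1),
        ((m+2+(k+1)).choose (2*(k+1)+1) : ℂ) * ω^(k+1)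
        = ((m+1+k).choose (2*k+1) : ℂ) * ω^(k+1)
          + 2 * (((m+1+(k+1)).choose (2*(k+1)+1) : ℂ) * ω^(k+1))
          - ((m+(k+1)).choose (2*(k+1)+1) : ℂ) * ω^(k+1) := by
      intro k _
      have h := choose_id m k
      have h' : ((m+3+k).choose (2*k+3) : ℂ)
          = ((m+1+k).choose (2*k+1) : ℂ) + 2 * ((m+2+k).choose (2*k+3) : ℂ)
            - ((m+1+k).choose (2*k+3) : ℂ) := by
        have hc : ((m+3+k).choose (2*k+3) : ℂ) + ((m+1+k).choose (2*k+3) : ℂ)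
            = ((m+1+k).choose (2*k+1) : ℂ) + 2 * ((m+2+k).choose (2*k+3) : ℂ) := by
          exact_mod_cast congrArg (Nat.cast : ℕ → ℂ) h
        linear_combination hc
      have e1 : m+2+(k+1) = m+3+k := by ring
      have e2 : 2*(k+1)+1 = 2*k+3 := by ring
      have e3 : m+1+(k+1) = m+2+k := by ring
      have e4 : m+(k+1) = m+1+k := by ring
      rw [e1, e2, e3, e4, h']
      ring
    rw [Finset.sum_congr rfl hbot]
    rw [Finset.sum_sub_distrib, Finset.sum_add_distrib]
    have s1 : ∑ k ∈ range (m+1), ((m+1+k).choose (2*k+1) : ℂ) * ω^(k+1) = ω * B := by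
      rw [hB, Finset.mul_sum]
      apply Finset.sum_congr rfl
      intro k _; ring
    have s2 : ∑ k ∈ range (m+1), 2 * (((m+1+(k+1)).choose (2*(k+1)+1) : ℂ) * ω^(k+1))
        = 2 * (B - (m+1)) := by
      rw [hB, Finset.sum_range_succ' (fun k => ((m+1+k).choose (2*k+1) : ℂ) * ω^k) m]
      rw [Finset.sum_range_succ (fun k => 2 * (((m+1+(k+1)).choose (2*(k+1)+1) : ℂ) * ω^(k+1))) m]
      have hz : (m+1+(m+1)).choose (2*(m+1)+1) = 0 := by
        apply Nat.choose_eq_zero_of_lt; omega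
      rw [hz]
      have hc0 : ((m+1+0).choose (2*0+1) : ℂ) * ω^0 = (m:ℂ)+1 := by norm_num
      rw [hc0, Nat.cast_zero]
      have hms : ∑ x ∈ range m, 2 * (((m+1+(x+1)).choose (2*(x+1)+1) : ℂ) * ω^(x+1))
           = 2 * ∑ k ∈ range m, ((m+1+(k+1)).choose (2*(k+1)+1) : ℂ) * ω^(k+1) := by
        rw [Finset.mul_sum]
      rw [hms]
      ring
    have s3 : ∑ k ∈ range (m+1), ((m+(k+1)).choose (2*(k+1)+1) : ℂ) * ω^(k+1)
        = C - m := by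
      have hext : C = ∑ k ∈ range (m+2), ((m+k).choose (2*k+1) : ℂ) * ω^k := by
        rw [hC, Finset.sum_range_succ, Finset.sum_range_succ]
        have hz1 : (m+m).choose (2*m+1) = 0 := by apply Nat.choose_eq_zero_of_lt; omega
        have hz2 : (m+(m+1)).choose (2*(m+1)+1) = 0 := by apply Nat.choose_eq_zero_of_lt; omega
        rw [hz1, hz2]; push_cast; ring
      rw [hext, Finset.sum_range_succ' (fun k => ((m+k).choose (2*k+1) : ℂ) * ω^k) (m+1)]
      simp
    rw [s1, s2, s3]
    have : ((m+2+0).choose (2*0+1) : ℂ) * ω^0 = (m : ℂ) + 2 := by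
      norm_num
    rw [this]
    ring

lemma key (ω : ℂ) (n : ℕ)
    (hω : ∑ k ∈ Finset.range (n + 1), (thetaCoeff n k : ℂ) * ω ^ k = 0) :
    sSeq ω (n+1) + sSeq ω n = 0 := by
  rw [sClosed, sClosed]
  have hext : ∑ k ∈ range n, ((n+k).choose (2*k+1) : ℂ) * ω^k
      = ∑ k ∈ range (n+1), ((n+k).choose (2*k+1) : ℂ) * ω^k := by
    rw [Finset.sum_range_succ]
    have hz : (n+n).choose (2*n+1) = 0 := Nat.choose_eq_zero_of_lt (by omega)
    rw [hz]; push_cast; ring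
  rw [hext, ← Finset.sum_add_distrib, ← hω]
  apply Finset.sum_congr rfl
  intro k _
  have hp : (n+1+k).choose (2*k+1) = (n+k).choose (2*k) + (n+k).choose (2*k+1) := by
    have := Nat.choose_succ_succ (n+k) (2*k)
    simpa [show n+k+1 = n+1+k by ring] using this
  rw [thetaCoeff]
  push_cast [hp]
  ring

lemma antisym (ω : ℂ) (n : ℕ) (hkey : sSeq ω (n+1) = - sSeq ω n) :
    ∀ j, j ≤ n → sSeq ω (n+1+j) = - sSeq ω (n-j) := by
  intro j
  induction j using Nat.twoStepInduction with
  | zero => intro _; simpa using hkey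
  | one =>
    intro h1
    obtain ⟨i, rfl⟩ : ∃ i, n = i+1 := ⟨n-1, by omega⟩
    have egoal : i+1+1+1 = i+3 := by ring
    have egoal2 : i+1-1 = i := by omega
    rw [egoal, egoal2]
    have r1 : sSeq ω (i+3) = (ω+2) * sSeq ω (i+2) - sSeq ω (i+1) := sSeq_rec ω (i+1)
    have r2 : sSeq ω (i+2) = (ω+2) * sSeq ω (i+1) - sSeq ω i := sSeq_rec ω i
    have hk : sSeq ω (i+2) = - sSeq ω (i+1) := hkey
    linear_combination r1 + (ω+1) * hk + r2
  | more j ih0 ih1 =>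
    intro h
    have e1 := ih0 (by omega)
    have e2 := ih1 (by omega)
    obtain ⟨i, hi⟩ : ∃ i, n - j = i + 2 := ⟨n - j - 2, by omega⟩
    rw [hi] at e1
    rw [show n - (j+1) = i+1 by omega] at e2
    rw [show n - (j+2) = i by omega, show n+1+(j+2) = (n+1+j)+2 by ring]
    rw [show n+1+(j+1) = (n+1+j)+1 by ring] at e2
    have r1 : sSeq ω (n+1+j+2) = (ω+2) * sSeq ω (n+1+j+1) - sSeq ω (n+1+j) := sSeq_rec ω (n+1+j)
    have r2 : sSeq ω (i+2) = (ω+2) * sSeq ω (i+1) - sSeq ω i := sSeq_rec ω i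
    linear_combination r1 + (ω+2) * e2 - e1 + r2

lemma sumzero (ω : ℂ) (n : ℕ)
    (hanti : ∀ j, j ≤ n → sSeq ω (n+1+j) = - sSeq ω (n-j)) :
    ∑ k ∈ range (2*n+1), sSeq ω k = 0 := by
  have claim : ∀ j, j ≤ n → ∑ k ∈ range (n+1+j), sSeq ω k = ∑ k ∈ range (n+1-j), sSeq ω k := by
    intro j
    induction j with
    | zero => intro _; rfl
    | succ j ih =>
      intro h
      rw [show n+1+(j+1) = (n+1+j)+1 by ring, Finset.sum_range_succ, ih (by omega),
        hanti j (by omega), show n+1-(j+1) = n-j by omega, show n+1-j = (n-j)+1 by omega,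
        Finset.sum_range_succ]
      ring
  have := claim n le_rfl
  rw [show n+1+n = 2*n+1 by ring, show n+1-n = 1 by omega] at this
  simpa [sSeq] using this

theorem stmt_3 (n : ℕ) (hn : 1 ≤ n) (hp : Nat.Prime (2 * n + 1)) (ω : ℂ)
    (hω : ∑ k ∈ Finset.range (n + 1), (thetaCoeff n k : ℂ) * ω ^ k = 0) :
    (∑ k ∈ Finset.range (2 * n + 1), aEnt ω k = 0) ∧
    (∑ k ∈ Finset.Icc 1 (2 * n), bEnt ω k = 0) ∧
    (∑ k ∈ Finset.range (2 * n + 1), dEnt ω k = 0) ∧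
    (aEnt ω n + 2 * bEnt ω n = 0) ∧
    (∀ k l : ℕ, k % (2 * n + 1) = l % (2 * n + 1) →
      aEnt ω k = aEnt ω l ∧ bEnt ω k = bEnt ω l ∧ cEnt ω k = cEnt ω l ∧ dEnt ω k = dEnt ω l) := by
  have hkey := key ω n hω
  have hkey' : sSeq ω (n+1) = - sSeq ω n := by linear_combination hkey
  have hanti := antisym ω n hkey'
  have hS : ∑ k ∈ range (2*n+1), sSeq ω k = 0 := sumzero ω n hanti
  have hs0 : sSeq ω 0 = 0 := rfl
  have hs1 : sSeq ω 1 = 1 := rfl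
  have htop : sSeq ω (2*n+1) = 0 := by
    have := hanti n le_rfl
    rw [show n+1+n = 2*n+1 by ring, show n - n = 0 by omega, hs0] at this
    simpa using this
  have htop2 : sSeq ω (2*n) = -1 := by
    have := hanti (n-1) (by omega)
    rw [show n+1+(n-1) = 2*n by omega, show n - (n-1) = 1 by omega, hs1] at this
    exact this
  refine ⟨?_, ?_, ?_, ?_, ?_⟩
  · rw [Finset.sum_congr rfl (fun k _ => aEnt_eq ω k), Finset.sum_range_sub, htop, hs0]
    ring
  · have hIcc : Finset.Icc 1 (2*n) = Finset.Ico 1 (2*n+1) := (Finset.Ico_add_one_right_eq_Icc 1 (2*n)).symm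
    rw [Finset.sum_congr rfl (fun k _ => bEnt_eq ω k), hIcc, Finset.sum_Ico_eq_sum_range]
    have hS' := hS
    rw [Finset.sum_range_succ' (sSeq ω) (2*n), hs0, add_zero] at hS'
    rw [show 2*n+1-1 = 2*n by omega]
    calc ∑ k ∈ range (2*n), sSeq ω (1+k) = ∑ k ∈ range (2*n), sSeq ω (k+1) := by
          apply Finset.sum_congr rfl; intro k _; rw [Nat.add_comm]
      _ = 0 := hS'
  · have hd : ∀ k ∈ range (2*n+1), dEnt ω k = (sSeq ω (k+1) - sSeq ω k) - ω * sSeq ω k := by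
      intro k _; rw [dEnt_eq]; ring
    rw [Finset.sum_congr rfl hd, Finset.sum_sub_distrib, Finset.sum_range_sub, htop, hs0,
      ← Finset.mul_sum, hS]
    ring
  · rw [aEnt_eq, bEnt_eq]
    linear_combination hkey
  · have hstop : sSeq ω (2*n+2) = 1 := by
      have := sSeq_rec ω (2*n)
      rw [show 2*n+1 = 2*n+1 from rfl] at this
      rw [this, htop, htop2]
      ring
    have hM : (Xmat * Ymat ω) ^ (2*n+1) = 1 := by
      rw [Mpow, show 2*n+1+1 = 2*n+2 by ring, htop, hstop, Matrix.one_fin_two]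
      norm_num
    have hmod : ∀ k : ℕ, (Xmat * Ymat ω) ^ k = (Xmat * Ymat ω) ^ (k % (2*n+1)) := by
      intro k
      conv_lhs => rw [← Nat.div_add_mod k (2*n+1)]
      rw [pow_add, pow_mul, hM, one_pow, one_mul]
    intro k l hkl
    have hM' : (Xmat * Ymat ω) ^ k = (Xmat * Ymat ω) ^ l := by
      rw [hmod k, hmod l, hkl]
    exact ⟨by rw [aEnt, aEnt, hM'], by rw [bEnt, bEnt, hM'], by rw [cEnt, cEnt, hM'],
      by rw [dEnt, dEnt, hM']⟩
end

section
/- Let n ≥ 1. For 0 ≤ r ≤ n set a_r^{(n)} = C(2n−r+1, 2n−2r+1) + C(2n−r, 2n−2r+1), and for s ≥ 0 set b_s = ((−1)^s/(s+2))·C(2s+2, s+1) (an integer). Define d_{k,ℓ}^{(n)} = Σ_{i=0}^{k} a_i^{(n)}·b_{k+ℓ−i} and the n×n integer matrix V_n = [v_{j,k}] with v_{j,k} = d_{n−j, k−1}^{(n)} for 1 ≤ j,k ≤ n. Let C_n be the companion matrix of θ_n. Then V_n² = 4·E_n + C_n, where E_n is the n×n identity matrix. -/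
open Finset Matrix

/-- The companion matrix `C_n` of `θ_n`: 1's on the subdiagonal, last column
`(-c_0^{(n)}, …, -c_{n-1}^{(n)})ᵀ`, and 0's elsewhere. -/
def companionTheta (n : ℕ) : Matrix (Fin n) (Fin n) ℤ :=
  Matrix.of fun i j =>
    if (j : ℕ) = n - 1 then - thetaCoeff n i
    else if (i : ℕ) = (j : ℕ) + 1 then 1 else 0

/-- `a_r^{(n)} = C(2n−r+1, 2n−2r+1) + C(2n−r, 2n−2r+1)` (for `0 ≤ r ≤ n`). -/
def aR (n r : ℕ) : ℤ :=
  ((2 * n - r + 1).choose (2 * n - 2 * r + 1) : ℤ) + ((2 * n - r).choose (2 * n - 2 * r + 1) : ℤ)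

/-- The signed Catalan number `b_s = ((−1)^s/(s+2))·C(2s+2, s+1)` (an integer;
the division is exact). -/
def bCat (s : ℕ) : ℤ := (-1) ^ s * ((((2 * s + 2).choose (s + 1)) / (s + 2) : ℕ) : ℤ)

/-- `d_{k,ℓ}^{(n)} = Σ_{i=0}^{k} a_i^{(n)}·b_{k+ℓ−i}`. -/
def dKL (n k l : ℕ) : ℤ := ∑ i ∈ Finset.range (k + 1), aR n i * bCat (k + l - i)

/-- The n×n integer matrix `V_n` with (1-based) entries `v_{j,k} = d_{n−j, k−1}^{(n)}`. -/
def Vmat (n : ℕ) : Matrix (Fin n) (Fin n) ℤ :=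
  Matrix.of fun j k => dKL n (n - 1 - (j : ℕ)) (k : ℕ)

open Polynomial





/-! ### basic facts -/

lemma bCat_eq (s : ℕ) : bCat s = (-1) ^ s * (catalan (s + 1) : ℤ) := by
  have h : (2 * s + 2).choose (s + 1) / (s + 2) = catalan (s + 1) := by
    rw [catalan_eq_centralBinom_div, Nat.centralBinom, show 2 * (s + 1) = 2 * s + 2 from by omega]
  rw [bCat, h]

lemma aR_theta (n j : ℕ) (h : j ≤ n) : aR n (n - j) = thetaCoeff n j := by
  have h1 : 2 * n - (n - j) + 1 = (n + j) + 1 := by omega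
  have h2 : 2 * n - (n - j) = n + j := by omega
  have h3 : 2 * n - 2 * (n - j) + 1 = 2 * j + 1 := by omega
  rw [aR, h1, h2, h3, thetaCoeff]
  have := Nat.choose_succ_succ (n + j) (2 * j)
  push_cast [this]
  ring

lemma aR_zero (n : ℕ) : aR n 0 = 1 := by
  have h1 : 2 * n - 0 + 1 = 2 * n + 1 := by omega
  have h2 : 2 * n - 2 * 0 + 1 = 2 * n + 1 := by omega
  rw [aR]
  norm_num [Nat.choose_self, Nat.choose_eq_zero_of_lt (show 2 * n < 2 * n + 1 from by omega)]

/-! ### the signed Catalan power series -/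

noncomputable def cser : PowerSeries ℤ := PowerSeries.mk fun s => (-1) ^ s * catalan s

lemma coeff_cser (s : ℕ) : PowerSeries.coeff (R := ℤ) s cser = (-1) ^ s * catalan s :=
  PowerSeries.coeff_mk _ _

lemma coeff_cser_sq (s : ℕ) : PowerSeries.coeff (R := ℤ) s (cser ^ 2) = (-1) ^ s * catalan (s + 1) := by
  rw [pow_two, PowerSeries.coeff_mul]
  have : ∀ p ∈ antidiagonal s,
      PowerSeries.coeff (R := ℤ) p.1 cser * PowerSeries.coeff (R := ℤ) p.2 cser
        = (-1) ^ s * (catalan p.1 * catalan p.2 : ℕ) := by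
    intro p hp
    rw [Finset.HasAntidiagonal.mem_antidiagonal] at hp
    rw [coeff_cser, coeff_cser, ← hp]
    push_cast
    ring
  rw [Finset.sum_congr rfl this, ← Finset.mul_sum]
  congr 1
  rw [catalan_succ' s]
  push_cast
  rfl

lemma coeff_cser_sq' (s : ℕ) : PowerSeries.coeff (R := ℤ) s (cser ^ 2) = bCat s := by
  rw [coeff_cser_sq, bCat_eq]

lemma cser_eq : PowerSeries.X * cser ^ 2 + cser = 1 := by
  ext s
  rcases s with _ | s
  · have h0 : PowerSeries.coeff (R := ℤ) 0 (PowerSeries.X * cser ^ 2 + cser) = 0 + 1 := by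
      rw [map_add]
      congr 1
      · exact PowerSeries.coeff_zero_X_mul _
      · rw [coeff_cser]; simp
    rw [h0]
    simp
  · rw [map_add, PowerSeries.coeff_succ_X_mul, coeff_cser_sq, coeff_cser]
    have : PowerSeries.coeff (R := ℤ) (s + 1) 1 = 0 := by
      rw [PowerSeries.coeff_one]; simp
    rw [this]
    push_cast
    ring

open Polynomial

/-! ### Fibonacci and Lucas polynomials -/

noncomputable def fibP : ℕ → Polynomial ℤ
  | 0 => 1
  | 1 => 1
  | (m + 2) => fibP (m + 1) + X * fibP m

noncomputable def Luc : ℕ → Polynomial ℤ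
  | 0 => 2
  | 1 => 1
  | (m + 2) => Luc (m + 1) + X * Luc m

lemma Luc_succ_succ (m : ℕ) : Luc (m + 2) = Luc (m + 1) + X * Luc m := rfl
lemma fibP_succ_succ (m : ℕ) : fibP (m + 2) = fibP (m + 1) + X * fibP m := rfl

lemma Luc_mul (b : ℕ) : ∀ t : ℕ, Luc (b + t) * Luc b = Luc (2 * b + t) + (- X) ^ b * Luc t := by
  induction b using Nat.twoStepInduction with
  | zero => intro t; simp [Luc]; ring
  | one =>
    intro t
    show Luc (1 + t) * Luc 1 = Luc (2 * 1 + t) + (-X) ^ 1 * Luc t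
    rw [show 1 + t = t + 1 from by omega, show 2 * 1 + t = t + 2 from by omega, Luc_succ_succ]
    show Luc (t + 1) * 1 = _
    rw [pow_one]
    ring
  | more b ih0 ih1 =>
    intro t
    have e1 : b + 2 + t = (b + 1) + (t + 1) := by omega
    have e2 : b + (t + 2) = (b + 1) + (t + 1) := by omega
    rw [show Luc (b + 2) = Luc (b + 1) + X * Luc b from rfl, mul_add, e1, ih1 (t + 1)]
    have h2 : Luc (b + 1 + (t + 1)) * (X * Luc b) = X * (Luc (b + (t + 2)) * Luc b) := by
      rw [e2]; ring
    rw [h2, ih0 (t + 2)]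
    rw [show 2 * (b + 1) + (t + 1) = (2 * b + t) + 3 from by omega,
      show 2 * b + (t + 2) = (2 * b + t) + 2 from by omega,
      show 2 * (b + 2) + t = (2 * b + t) + 4 from by omega]
    set s := 2 * b + t
    rw [show s + 4 = (s + 2) + 2 from by omega, Luc_succ_succ (s + 2),
      show s + 3 = (s + 1) + 2 from by omega, Luc_succ_succ (s + 1), Luc_succ_succ s,
      Luc_succ_succ t]
    ring


lemma Luc_dstep (m : ℕ) : Luc (m + 4) = (1 + 2 * X) * Luc (m + 2) - X ^ 2 * Luc m := by
  rw [show m + 4 = (m + 2) + 2 from by omega, Luc_succ_succ (m + 2),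
    show m + 3 = (m + 1) + 2 from by omega, Luc_succ_succ (m + 1), Luc_succ_succ m]
  ring

lemma fibP_coeff (m k : ℕ) : (fibP m).coeff k = ((m - k).choose k : ℤ) := by
  induction m using Nat.twoStepInduction generalizing k with
  | zero =>
    show (1 : Polynomial ℤ).coeff k = _
    rcases k with _ | k
    · simp
    · simp [coeff_one, Nat.choose_eq_zero_of_lt]
  | one =>
    show (1 : Polynomial ℤ).coeff k = _
    rcases k with _ | k
    · simp
    · rw [show (1 : ℕ) - (k + 1) = 0 from by omega]
      simp [coeff_one, Nat.choose_eq_zero_of_lt]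
  | more m ih0 ih1 =>
    rw [fibP_succ_succ, coeff_add]
    rcases k with _ | k
    · simp [ih1]
    · rw [coeff_X_mul, ih0, ih1]
      rcases Nat.lt_or_ge (k + 1) (m + 2) with h | h
      · rw [show m + 2 - (k + 1) = (m + 1 - (k + 1)) + 1 from by omega,
          show m - k = m + 1 - (k + 1) from by omega, Nat.choose_succ_succ']
        push_cast
        ring
      · rw [Nat.choose_eq_zero_of_lt (show m + 2 - (k+1) < k + 1 from by omega),
          Nat.choose_eq_zero_of_lt (show m + 1 - (k+1) < k + 1 from by omega),
          Nat.choose_eq_zero_of_lt (show m - k < k from by omega)]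
        simp

lemma Luc_eq_fib (m : ℕ) : Luc (m + 2) = fibP (m + 2) + X * fibP m := by
  induction m using Nat.twoStepInduction with
  | zero =>
    show Luc 2 = fibP 2 + X * fibP 0
    rw [Luc_succ_succ, fibP_succ_succ]
    show Luc 1 + X * Luc 0 = fibP 1 + X * fibP 0 + X * fibP 0
    show (1 : Polynomial ℤ) + X * 2 = 1 + X * 1 + X * 1
    ring
  | one =>
    show Luc 3 = fibP 3 + X * fibP 1
    rw [show (3:ℕ) = 1 + 2 from rfl, Luc_succ_succ, fibP_succ_succ, Luc_succ_succ, fibP_succ_succ]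
    show Luc 1 + X * Luc 0 + X * Luc 1 = fibP 1 + X * fibP 0 + X * fibP 1 + X * fibP 1
    show (1 : Polynomial ℤ) + X * 2 + X * 1 = 1 + X * 1 + X * 1 + X * 1
    ring
  | more m ih0 ih1 =>
    rw [Luc_succ_succ (m + 2), fibP_succ_succ (m + 2),
      show m + 2 + 1 = (m + 1) + 2 from by omega, ih1, ih0, fibP_succ_succ m]
    ring

lemma Luc_coeff_vanish (m k : ℕ) (h : m < 2 * k) : (Luc m).coeff k = 0 := by
  have hk : k ≠ 0 := by omega
  rcases m with _ | _ | m
  · show (2 : Polynomial ℤ).coeff k = 0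
    rcases k with _ | k
    · omega
    · rw [show (2 : Polynomial ℤ) = C 2 from by norm_num, coeff_C]
      simp
  · show (1 : Polynomial ℤ).coeff k = 0
    rcases k with _ | k
    · omega
    · simp [coeff_one]
  · rw [Luc_eq_fib, coeff_add, fibP_coeff]
    rcases k with _ | k
    · omega
    · rw [coeff_X_mul, fibP_coeff,
        Nat.choose_eq_zero_of_lt (show m + 2 - (k + 1) < k + 1 from by omega),
        Nat.choose_eq_zero_of_lt (show m - k < k from by omega)]
      simp

lemma Luc_natDegree_le (m : ℕ) : (Luc m).natDegree ≤ m / 2 := by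
  refine natDegree_le_iff_coeff_eq_zero.mpr fun k hk => Luc_coeff_vanish m k (by omega)

lemma Luc_coeff_aR (n r : ℕ) (hn : 1 ≤ n) (hr : r ≤ n) :
    (Luc (2 * n + 1)).coeff r = aR n r := by
  obtain ⟨j, rfl⟩ : ∃ j, n = j + 1 := ⟨n - 1, by omega⟩
  rw [show 2 * (j + 1) + 1 = (2 * j + 1) + 2 from by omega, Luc_eq_fib, coeff_add, fibP_coeff]
  rcases r with _ | r
  · have h0 : (X * fibP (2 * j + 1)).coeff 0 = 0 := by
      rw [mul_coeff_zero]
      simp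
    rw [h0, aR_zero]
    simp
  · rw [coeff_X_mul, fibP_coeff, aR]
    have e1 : 2 * (j + 1) - (r + 1) + 1 = 2 * j + 1 + 2 - (r + 1) := by omega
    have e2 : 2 * j + 1 - r = 2 * (j + 1) - (r + 1) := by omega
    rw [e1, ← e2]
    have s1 : (2 * j + 1 + 2 - (r + 1)).choose (2 * (j + 1) - 2 * (r + 1) + 1)
        = (2 * j + 1 + 2 - (r + 1)).choose (r + 1) := by
      rw [← Nat.choose_symm (show 2 * (j + 1) - 2 * (r + 1) + 1 ≤ 2 * j + 1 + 2 - (r + 1) from by omega)]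
      congr 1
      omega
    have s2 : (2 * j + 1 - r).choose (2 * (j + 1) - 2 * (r + 1) + 1)
        = (2 * j + 1 - r).choose r := by
      rcases Nat.lt_or_ge (2 * j + 1 - r) (2 * (j + 1) - 2 * (r + 1) + 1) with h | h
      · rw [Nat.choose_eq_zero_of_lt h, Nat.choose_eq_zero_of_lt (show 2 * j + 1 - r < r from by omega)]
      · rw [← Nat.choose_symm (show 2 * (j + 1) - 2 * (r + 1) + 1 ≤ 2 * j + 1 - r from h)]
        have : 2 * j + 1 - r - (2 * (j + 1) - 2 * (r + 1) + 1) = r := by omega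
        rw [this]
    rw [s1, s2]

/-! ### the master identity -/

lemma coe_two_ps : ((2 : Polynomial ℤ) : PowerSeries ℤ) = 2 := by
  rw [show (2 : Polynomial ℤ) = Polynomial.C 2 from by norm_num, Polynomial.coe_C]
  exact map_ofNat _ 2

lemma coe_three_ps : ((3 : Polynomial ℤ) : PowerSeries ℤ) = 3 := by
  rw [show (3 : Polynomial ℤ) = Polynomial.C 3 from by norm_num, Polynomial.coe_C]
  exact map_ofNat _ 3

lemma Luc_coe_two : ((Luc 2 : Polynomial ℤ) : PowerSeries ℤ) = 1 + 2 * PowerSeries.X := by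
  have h : Luc 2 = 1 + 2 * X := by
    rw [Luc_succ_succ]
    show (1 : Polynomial ℤ) + X * 2 = 1 + 2 * X
    ring
  rw [h]
  push_cast [coe_two_ps]
  ring

lemma Luc_coe_three : ((Luc 3 : Polynomial ℤ) : PowerSeries ℤ) = 1 + 3 * PowerSeries.X := by
  have h : Luc 3 = 1 + 3 * X := by
    rw [show (3:ℕ) = 1 + 2 from rfl, Luc_succ_succ, Luc_succ_succ]
    show (1 : Polynomial ℤ) + X * 2 + X * 1 = 1 + 3 * X
    ring
  rw [h]
  push_cast [coe_three_ps]
  ring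

lemma Luc_coe_zero : ((Luc 0 : Polynomial ℤ) : PowerSeries ℤ) = 2 := by
  show ((2 : Polynomial ℤ) : PowerSeries ℤ) = 2
  exact coe_two_ps

lemma Luc_coe_one : ((Luc 1 : Polynomial ℤ) : PowerSeries ℤ) = 1 := by
  show ((1 : Polynomial ℤ) : PowerSeries ℤ) = 1
  exact Polynomial.coe_one

lemma mid : ∀ m : ℕ, ((Luc (m + 2) : Polynomial ℤ) : PowerSeries ℤ) * cser ^ 2
    = ((Luc m : Polynomial ℤ) : PowerSeries ℤ)
      + (-1) ^ (m + 1) * (PowerSeries.X ^ m * cser ^ m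
          * (1 - PowerSeries.X ^ 2 * cser ^ 4)) := by
  intro m
  induction m using Nat.twoStepInduction with
  | zero =>
    rw [Luc_coe_two, Luc_coe_zero]
    linear_combination (1 + cser - PowerSeries.X * cser ^ 2) * cser_eq
  | one =>
    rw [Luc_coe_three, Luc_coe_one]
    linear_combination (PowerSeries.X ^ 2 * cser ^ 3 - PowerSeries.X * cser ^ 2
      + (1 + PowerSeries.X) * cser + 1) * cser_eq
  | more m ih0 ih1 =>
    have hco : ((Luc (m + 2 + 2) : Polynomial ℤ) : PowerSeries ℤ)
        = ((Luc (m + 2 + 1) : Polynomial ℤ) : PowerSeries ℤ)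
          + PowerSeries.X * ((Luc (m + 2) : Polynomial ℤ) : PowerSeries ℤ) := by
      rw [Luc_succ_succ (m + 2)]
      push_cast
      ring
    have hco2 : ((Luc (m + 2) : Polynomial ℤ) : PowerSeries ℤ)
        = ((Luc (m + 1) : Polynomial ℤ) : PowerSeries ℤ)
          + PowerSeries.X * ((Luc m : Polynomial ℤ) : PowerSeries ℤ) := by
      rw [Luc_succ_succ m]
      push_cast
      ring
    rw [hco, show m + 2 + 1 = (m + 1) + 2 from by omega]
    linear_combination ih1 + PowerSeries.X * ih0 - hco2
      + ((-1 : PowerSeries ℤ) ^ (m + 2) * PowerSeries.X ^ (m + 1) * cser ^ m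
          * (1 - PowerSeries.X ^ 2 * cser ^ 4)) * cser_eq

/-! ### coefficient extraction -/


lemma coeff_coe_mul_mu (P : Polynomial ℤ) (j : ℕ) :
    PowerSeries.coeff (R := ℤ) j ((P : PowerSeries ℤ) * cser ^ 2)
      = ∑ i ∈ range (j + 1), P.coeff i * bCat (j - i) := by
  rw [PowerSeries.coeff_mul]
  rw [Finset.Nat.sum_antidiagonal_eq_sum_range_succ
    (fun x y => (PowerSeries.coeff (R := ℤ) x) (P : PowerSeries ℤ)
      * (PowerSeries.coeff (R := ℤ) y) (cser ^ 2)) j]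
  exact Finset.sum_congr rfl fun i _ => by
    rw [Polynomial.coeff_coe, coeff_cser_sq']

lemma conv_eq (k j : ℕ) (hj : j ≤ 2 * k) :
    ∑ i ∈ range (j + 1), (Luc (2 * k + 3)).coeff i * bCat (j - i)
      = (Luc (2 * k + 1)).coeff j := by
  have h := congrArg (PowerSeries.coeff (R := ℤ) j) (mid (2 * k + 1))
  rw [show 2 * k + 1 + 2 = 2 * k + 3 from by omega, coeff_coe_mul_mu, map_add,
    Polynomial.coeff_coe] at h
  have hz : PowerSeries.coeff (R := ℤ) j ((-1 : PowerSeries ℤ) ^ (2 * k + 1 + 1)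
      * (PowerSeries.X ^ (2 * k + 1) * cser ^ (2 * k + 1)
        * (1 - PowerSeries.X ^ 2 * cser ^ 4))) = 0 := by
    have e : (-1 : PowerSeries ℤ) ^ (2 * k + 1 + 1)
        * (PowerSeries.X ^ (2 * k + 1) * cser ^ (2 * k + 1)
          * (1 - PowerSeries.X ^ 2 * cser ^ 4))
        = PowerSeries.X ^ (2 * k + 1) * ((-1 : PowerSeries ℤ) ^ (2 * k + 2)
            * cser ^ (2 * k + 1) * (1 - PowerSeries.X ^ 2 * cser ^ 4)) := by
      ring
    rw [e, PowerSeries.coeff_X_pow_mul', if_neg (by omega)]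
  rw [hz, add_zero] at h
  exact h

lemma fact_dn (n k : ℕ) (hn : 1 ≤ n) (hk : k + 2 ≤ n) :
    ∑ i ∈ range (n + 1), aR n i * bCat (n + k - i) = 0 := by
  obtain ⟨m, rfl⟩ : ∃ m, n = m + 1 := ⟨n - 1, by omega⟩
  have h := conv_eq m (m + 1 + k) (by omega)
  rw [show 2 * m + 3 = 2 * (m + 1) + 1 from by omega] at h
  have hsub : ∑ i ∈ range (m + 1 + k + 1), (Luc (2 * (m + 1) + 1)).coeff i * bCat (m + 1 + k - i)
      = ∑ i ∈ range (m + 1 + 1), (Luc (2 * (m + 1) + 1)).coeff i * bCat (m + 1 + k - i) := by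
    refine (Finset.sum_subset (by intro x hx; simp only [mem_range] at *; omega) ?_).symm
    intro x hx hx2
    simp only [mem_range] at hx hx2
    rw [Luc_coeff_vanish (2 * (m + 1) + 1) x (by omega), zero_mul]
  rw [hsub] at h
  rw [Luc_coeff_vanish (2 * m + 1) (m + 1 + k) (by omega)] at h
  rw [← h]
  refine Finset.sum_congr rfl fun i hi => ?_
  simp only [mem_range] at hi
  rw [Luc_coeff_aR _ _ (by omega) (by omega)]

lemma fact_col0 (n j : ℕ) (hn : 1 ≤ n) (hj : j ≤ n - 1) :
    dKL n j 0 = (Luc (2 * n - 1)).coeff j := by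
  obtain ⟨m, rfl⟩ : ∃ m, n = m + 1 := ⟨n - 1, by omega⟩
  have h := conv_eq m j (by omega)
  rw [show 2 * m + 3 = 2 * (m + 1) + 1 from by omega,
    show 2 * m + 1 = 2 * (m + 1) - 1 from by omega] at h
  rw [dKL, ← h]
  refine Finset.sum_congr rfl fun i hi => ?_
  simp only [mem_range] at hi
  rw [Luc_coeff_aR _ _ (by omega) (by omega), show j + 0 - i = j - i from by omega]

/-! ### the key polynomial identity -/

lemma id2 (k : ℕ) :
    (X : Polynomial ℤ) ^ 2 * Luc (2 * k + 1) ^ 2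
      = Luc (2 * k + 3) * ((1 + 2 * X) * Luc (2 * k + 1) - Luc (2 * k + 3))
        + X ^ (2 * k + 1) + 4 * X ^ (2 * k + 2) := by
  have h1 := Luc_mul (2 * k + 1) 2
  have h2 := Luc_mul (2 * k + 3) 0
  have h3 := Luc_mul (2 * k + 1) 0
  have h4 := Luc_dstep (4 * k + 2)
  rw [show 2 * k + 1 + 2 = 2 * k + 3 from by omega,
    show 2 * (2 * k + 1) + 2 = 4 * k + 4 from by omega] at h1
  rw [show 2 * k + 3 + 0 = 2 * k + 3 from by omega,
    show 2 * (2 * k + 3) + 0 = (4 * k + 2) + 4 from by omega] at h2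
  rw [show 2 * k + 1 + 0 = 2 * k + 1 from by omega,
    show 2 * (2 * k + 1) + 0 = 4 * k + 2 from by omega] at h3
  rw [show 4 * k + 2 + 2 = 4 * k + 4 from by omega] at h4
  have hodd1 : (-X : Polynomial ℤ) ^ (2 * k + 1) = - X ^ (2 * k + 1) :=
    Odd.neg_pow ⟨k, by omega⟩ X
  have hodd3 : (-X : Polynomial ℤ) ^ (2 * k + 3) = - X ^ (2 * k + 3) :=
    Odd.neg_pow ⟨k + 1, by omega⟩ X
  rw [hodd1] at h1 h3
  rw [hodd3] at h2
  have hL0 : Luc 0 = 2 := rfl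
  have hL2 : Luc 2 = 1 + 2 * X := by
    rw [Luc_succ_succ]
    show (1 : Polynomial ℤ) + X * 2 = 1 + 2 * X
    ring
  rw [hL2] at h1
  rw [hL0] at h2 h3
  have hsq : Luc (2 * k + 1) ^ 2 = Luc (2 * k + 1) * Luc (2 * k + 1) := sq _
  have hsq2 : Luc (2 * k + 3) ^ 2 = Luc (2 * k + 3) * Luc (2 * k + 3) := sq _
  linear_combination (X : Polynomial ℤ) ^ 2 * h3 - (1 + 2 * X) * h1 + h2 + h4

/-! ### theta and p as polynomials -/



noncomputable def thetaPoly (n : ℕ) : Polynomial ℤ :=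
  ∑ k ∈ range (n + 1), monomial k (thetaCoeff n k)

noncomputable def pPoly (n : ℕ) : Polynomial ℤ :=
  ∑ j ∈ range n, monomial j (dKL n (n - 1 - j) 0)

lemma thetaPoly_coeff (n j : ℕ) :
    (thetaPoly n).coeff j = if j ≤ n then thetaCoeff n j else 0 := by
  rw [thetaPoly, finset_sum_coeff]
  rw [Finset.sum_congr rfl (fun k _ => coeff_monomial)]
  rcases Nat.lt_or_ge j (n + 1) with h | h
  · rw [Finset.sum_ite_eq' (range (n + 1)) j (fun k => thetaCoeff n k), if_pos (mem_range.mpr h),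
      if_pos (by omega)]
  · rw [if_neg (by omega)]
    exact Finset.sum_eq_zero fun k hk => if_neg (by simp only [mem_range] at hk; omega)

lemma pPoly_coeff (n j : ℕ) :
    (pPoly n).coeff j = if j < n then dKL n (n - 1 - j) 0 else 0 := by
  rw [pPoly, finset_sum_coeff]
  rw [Finset.sum_congr rfl (fun k _ => coeff_monomial)]
  rcases Nat.lt_or_ge j n with h | h
  · rw [Finset.sum_ite_eq' (range n) j (fun k => dKL n (n - 1 - k) 0), if_pos (mem_range.mpr h),
      if_pos h]
  · rw [if_neg (by omega)]
    exact Finset.sum_eq_zero fun k hk => if_neg (by simp only [mem_range] at hk; omega)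

lemma thetaCoeff_top (n : ℕ) : thetaCoeff n n = 1 := by
  rw [thetaCoeff, show n + n = 2 * n from by omega, Nat.choose_self,
    Nat.choose_eq_zero_of_lt (by omega)]
  norm_num

lemma thetaPoly_degree_le (n : ℕ) : (thetaPoly n).degree ≤ (n : ℕ) := by
  rw [thetaPoly]
  refine (degree_sum_le _ _).trans ?_
  refine Finset.sup_le fun k hk => ?_
  simp only [mem_range] at hk
  exact (degree_monomial_le _ _).trans (by exact_mod_cast Nat.le_of_lt_succ hk)

lemma thetaPoly_monic (n : ℕ) : (thetaPoly n).Monic := by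
  refine monic_of_natDegree_le_of_coeff_eq_one n ?_ ?_
  · exact natDegree_le_iff_degree_le.mpr (thetaPoly_degree_le n)
  · rw [thetaPoly_coeff, if_pos le_rfl, thetaCoeff_top]

lemma thetaPoly_degree (n : ℕ) : (thetaPoly n).degree = (n : ℕ) := by
  refine degree_eq_of_le_of_coeff_ne_zero (thetaPoly_degree_le n) ?_
  rw [thetaPoly_coeff, if_pos le_rfl, thetaCoeff_top]
  norm_num

lemma thetaPoly_eq_reflect (n : ℕ) (hn : 1 ≤ n) :
    thetaPoly n = reflect n (Luc (2 * n + 1)) := by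
  ext j
  rw [thetaPoly_coeff, coeff_reflect]
  rcases Nat.lt_or_ge n j with h | h
  · rw [if_neg (by omega), revAt_eq_self_of_lt h, Luc_coeff_vanish _ _ (by omega)]
  · rw [if_pos h, revAt_le h, Luc_coeff_aR n (n - j) hn (by omega), aR_theta n j h]

lemma pPoly_eq_reflect (n : ℕ) (hn : 1 ≤ n) :
    pPoly n = reflect (n - 1) (Luc (2 * n - 1)) := by
  ext j
  rw [pPoly_coeff, coeff_reflect]
  rcases Nat.lt_or_ge j n with h | h
  · rw [if_pos h, revAt_le (by omega : j ≤ n - 1)]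
    exact fact_col0 n (n - 1 - j) hn (by omega)
  · rw [if_neg (by omega), revAt_eq_self_of_lt (by omega), Luc_coeff_vanish _ _ (by omega)]

/-! ### reflected key identity -/

lemma key_poly (n : ℕ) (hn : 1 ≤ n) :
    ∃ s : Polynomial ℤ, pPoly n ^ 2 = X + 4 + s * thetaPoly n := by
  obtain ⟨m, rfl⟩ : ∃ m, n = m + 1 := ⟨n - 1, by omega⟩
  refine ⟨reflect (m + 1) ((1 + 2 * X) * Luc (2 * m + 1) - Luc (2 * m + 3)), ?_⟩
  have h := id2 m
  have hrefl := congrArg (reflect (2 * m + 2)) h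
  have hdL1 : (Luc (2 * m + 1)).natDegree ≤ m := (Luc_natDegree_le _).trans (by omega)
  have hdL3 : (Luc (2 * m + 3)).natDegree ≤ m + 1 := (Luc_natDegree_le _).trans (by omega)
  have hd12 : (1 + 2 * X : Polynomial ℤ).natDegree ≤ 1 := by
    refine (natDegree_add_le _ _).trans (max_le (by simp) ?_)
    refine natDegree_mul_le.trans ?_
    simp [natDegree_X]
  have hdQ : ((1 + 2 * X) * Luc (2 * m + 1) - Luc (2 * m + 3)).natDegree ≤ m + 1 := by
    refine (natDegree_sub_le _ _).trans (max_le ?_ hdL3)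
    exact natDegree_mul_le.trans (by omega)
  -- LHS
  have hL : reflect (2 * m + 2) ((X : Polynomial ℤ) ^ 2 * Luc (2 * m + 1) ^ 2)
      = pPoly (m + 1) ^ 2 := by
    have e : (X : Polynomial ℤ) ^ 2 * Luc (2 * m + 1) ^ 2
        = X ^ 2 * (Luc (2 * m + 1) * Luc (2 * m + 1)) := by ring
    rw [e, show 2 * m + 2 = 2 + (m + m) from by omega,
      reflect_mul _ _ (natDegree_X_pow_le 2) (natDegree_mul_le.trans (by omega)),
      reflect_mul _ _ hdL1 hdL1, reflect_monomial,
      show (revAt 2) 2 = 0 from by rw [revAt_le (by omega)],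
      pPoly_eq_reflect (m + 1) (by omega), show 2 * (m + 1) - 1 = 2 * m + 1 from by omega,
      show m + 1 - 1 = m from by omega]
    ring
  -- RHS
  have hR : reflect (2 * m + 2)
        (Luc (2 * m + 3) * ((1 + 2 * X) * Luc (2 * m + 1) - Luc (2 * m + 3))
          + X ^ (2 * m + 1) + 4 * X ^ (2 * m + 2))
      = X + 4 + reflect (m + 1) ((1 + 2 * X) * Luc (2 * m + 1) - Luc (2 * m + 3))
          * thetaPoly (m + 1) := by
    rw [reflect_add, reflect_add,
      show 2 * m + 2 = (m + 1) + (m + 1) from by omega,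
      reflect_mul _ _ hdL3 hdQ, reflect_monomial,
      show (revAt (m + 1 + (m + 1))) (2 * m + 1) = 1 from by rw [revAt_le (by omega)]; omega,
      show (4 : Polynomial ℤ) * X ^ (m + 1 + (m + 1)) = C 4 * X ^ (m + 1 + (m + 1)) from by norm_num,
      reflect_C_mul, reflect_monomial,
      show (revAt (m + 1 + (m + 1))) (m + 1 + (m + 1)) = 0 from by rw [revAt_le (by omega)]; omega,
      thetaPoly_eq_reflect (m + 1) (by omega),
      show 2 * (m + 1) + 1 = 2 * m + 3 from by omega]
    rw [show (C 4 : Polynomial ℤ) = 4 from by norm_num]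
    ring
  rw [hL, hR] at hrefl
  exact hrefl

/-! ### dKL recurrences -/

lemma dKL_rec (n m k : ℕ) : dKL n (m + 1) k = dKL n m (k + 1) + aR n (m + 1) * bCat k := by
  rw [dKL, dKL, Finset.sum_range_succ, show m + 1 + k - (m + 1) = k from by omega]
  congr 1
  exact Finset.sum_congr rfl fun i hi => by rw [show m + 1 + k - i = m + (k + 1) - i from by omega]

lemma dKL_zero (n k : ℕ) : dKL n 0 k = bCat k := by
  rw [dKL, Finset.sum_range_one, aR_zero, show 0 + k - 0 = k from by omega, one_mul]

lemma dKL_top (n k : ℕ) (hn : 1 ≤ n) (hk : k + 2 ≤ n) : dKL n n k = 0 := by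
  rw [dKL]
  exact fact_dn n k hn hk

/-! ### companion action -/

lemma mulVec_companion (n : ℕ) (hn : 1 ≤ n) (v : Fin n → ℤ) (i : Fin n) :
    (companionTheta n *ᵥ v) i
      = (if h : 1 ≤ (i : ℕ) then v ⟨(i : ℕ) - 1, by omega⟩ else 0)
        - thetaCoeff n i * v ⟨n - 1, by omega⟩ := by
  rw [mulVec, dotProduct]
  have hsplit : ∀ j : Fin n, companionTheta n i j * v j
      = (if (j : ℕ) = n - 1 then -thetaCoeff n i * v j else 0)
        + (if (i : ℕ) = (j : ℕ) + 1 then v j else 0) := by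
    intro j
    show (if (j : ℕ) = n - 1 then - thetaCoeff n i
      else if (i : ℕ) = (j : ℕ) + 1 then 1 else 0) * v j = _
    by_cases h1 : (j : ℕ) = n - 1
    · have hi2 : ¬ ((i : ℕ) = (j : ℕ) + 1) := by have := i.isLt; omega
      rw [if_pos h1, if_pos h1, if_neg hi2, add_zero, neg_mul]
    · rw [if_neg h1, if_neg h1, zero_add]
      split_ifs with h2
      · rw [one_mul]
      · rw [zero_mul]
  rw [Finset.sum_congr rfl fun j _ => hsplit j, Finset.sum_add_distrib]
  have hs1 : ∑ j : Fin n, (if (j : ℕ) = n - 1 then -thetaCoeff n i * v j else 0)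
      = -thetaCoeff n i * v ⟨n - 1, by omega⟩ := by
    rw [Finset.sum_eq_single_of_mem (⟨n - 1, by omega⟩ : Fin n) (Finset.mem_univ _)]
    · rw [if_pos rfl]
    · intro j _ hj
      rw [if_neg (fun hc => hj (Fin.ext (by simpa using hc)))]
  have hs2 : ∑ j : Fin n, (if (i : ℕ) = (j : ℕ) + 1 then v j else 0)
      = if h : 1 ≤ (i : ℕ) then v ⟨(i : ℕ) - 1, by omega⟩ else 0 := by
    by_cases h : 1 ≤ (i : ℕ)
    · rw [dif_pos h, Finset.sum_eq_single_of_mem (⟨(i : ℕ) - 1, by omega⟩ : Fin n)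
        (Finset.mem_univ _)]
      · rw [if_pos (by simp; omega)]
      · intro j _ hj
        refine if_neg fun hc => hj (Fin.ext ?_)
        simp only []
        omega
    · rw [dif_neg h]
      exact Finset.sum_eq_zero fun j _ => if_neg (by omega)
  rw [hs1, hs2]
  ring

/-! ### reduction map and multiplication matrix -/

lemma modTheta_add_mul (n : ℕ) (f d : Polynomial ℤ) :
    (f + thetaPoly n * d) %ₘ thetaPoly n = f %ₘ thetaPoly n := by
  rw [add_modByMonic,
    (modByMonic_eq_zero_iff_dvd (thetaPoly_monic n)).mpr (dvd_mul_right _ _), add_zero]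

lemma rho_X_mul (n : ℕ) (hn : 1 ≤ n) (f : Polynomial ℤ) :
    (fun i : Fin n => ((X * f) %ₘ thetaPoly n).coeff i)
      = companionTheta n *ᵥ (fun i : Fin n => (f %ₘ thetaPoly n).coeff i) := by
  funext i
  have hmon := thetaPoly_monic n
  set θ := thetaPoly n with hθ
  set r := f %ₘ θ with hrdef
  have hrd : r.degree < (n : ℕ) := by
    rw [← thetaPoly_degree n]
    exact degree_modByMonic_lt f hmon
  have hf := modByMonic_add_div f θ
  have hXf : X * f = (X * r - C (r.coeff (n - 1)) * θ) + θ * (C (r.coeff (n - 1)) + X * (f /ₘ θ)) := by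
    linear_combination (-X : Polynomial ℤ) * hf
  have hdeg2 : (X * r - C (r.coeff (n - 1)) * θ).degree < ((n : ℕ) : WithBot ℕ) := by
    rw [degree_lt_iff_coeff_zero]
    intro M hM
    rw [coeff_sub, coeff_C_mul, hθ, thetaPoly_coeff]
    have hXr : (X * r).coeff M = r.coeff (M - 1) := by
      rw [show M = (M - 1) + 1 from by omega, coeff_X_mul, show M - 1 + 1 - 1 = M - 1 from by omega]
    rw [hXr]
    rcases Nat.lt_or_ge n M with h | h
    · rw [if_neg (by omega), mul_zero, coeff_eq_zero_of_degree_lt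
        (hrd.trans_le (by exact_mod_cast by omega : ((n : ℕ) : WithBot ℕ) ≤ (M - 1 : ℕ)))]
      ring
    · have hMn : M = n := by omega
      rw [hMn, if_pos le_rfl, thetaCoeff_top, mul_one, show n - 1 = n - 1 from rfl]
      ring
  have hmod : (X * f) %ₘ θ = X * r - C (r.coeff (n - 1)) * θ := by
    rw [hXf, modTheta_add_mul, (modByMonic_eq_self_iff hmon).mpr (by rw [thetaPoly_degree]; exact hdeg2)]
  rw [hmod, coeff_sub, coeff_C_mul, hθ, thetaPoly_coeff, if_pos (by omega : (i : ℕ) ≤ n),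
    mulVec_companion n hn]
  by_cases h : 1 ≤ (i : ℕ)
  · rw [dif_pos h]
    have hXr : (X * r).coeff (i : ℕ) = r.coeff ((i : ℕ) - 1) := by
      rw [show (i : ℕ) = ((i : ℕ) - 1) + 1 from by omega, coeff_X_mul,
        show (i : ℕ) - 1 + 1 - 1 = (i : ℕ) - 1 from by omega]
    rw [hXr]
    ring
  · rw [dif_neg h]
    have hi0 : (i : ℕ) = 0 := by omega
    rw [hi0, mul_coeff_zero, coeff_X_zero, zero_mul]
    ring

noncomputable def Mmat_s11 (n : ℕ) (f : Polynomial ℤ) : Matrix (Fin n) (Fin n) ℤ :=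
  Matrix.of fun i k => ((X ^ (k : ℕ) * f) %ₘ thetaPoly n).coeff i

lemma Mmat_mul (n : ℕ) (hn : 1 ≤ n) (f g : Polynomial ℤ) :
    Mmat_s11 n f * Mmat_s11 n g = Mmat_s11 n (f * g) := by
  ext i k
  rw [Matrix.mul_apply]
  show (∑ j : Fin n, ((X ^ (j : ℕ) * f) %ₘ thetaPoly n).coeff i
    * ((X ^ (k : ℕ) * g) %ₘ thetaPoly n).coeff j) = ((X ^ (k : ℕ) * (f * g)) %ₘ thetaPoly n).coeff i
  have hmon := thetaPoly_monic n
  set θ := thetaPoly n with hθ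
  set r := (X ^ (k : ℕ) * g) %ₘ θ with hrdef
  have hrd : r.natDegree < n := by
    rcases eq_or_ne r 0 with h0 | h0
    · rw [h0, natDegree_zero]; omega
    · refine (natDegree_lt_iff_degree_lt h0).mpr ?_
      rw [← thetaPoly_degree n]
      exact degree_modByMonic_lt _ hmon
  have h1 : (r * f) %ₘ θ = ∑ j ∈ range n, r.coeff j • ((X ^ j * f) %ₘ θ) := by
    conv_lhs => rw [as_sum_range' r n hrd]
    rw [Finset.sum_mul, ← modByMonicHom_apply, map_sum]
    refine Finset.sum_congr rfl fun j _ => ?_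
    rw [modByMonicHom_apply, ← smul_X_eq_monomial, smul_mul_assoc, smul_modByMonic]
  have h2 : X ^ (k : ℕ) * (f * g) = r * f + θ * ((X ^ (k : ℕ) * g /ₘ θ) * f) := by
    have hdiv := modByMonic_add_div (X ^ (k : ℕ) * g) θ
    linear_combination (-f : Polynomial ℤ) * hdiv
  rw [h2, modTheta_add_mul, h1, finset_sum_coeff]
  rw [← Fin.sum_univ_eq_sum_range (fun j => (r.coeff j • ((X ^ j * f) %ₘ θ)).coeff i) n]
  refine Finset.sum_congr rfl fun j _ => ?_
  rw [coeff_smul, smul_eq_mul]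
  ring

lemma pPoly_degree_lt (n : ℕ) (hn : 1 ≤ n) : (pPoly n).degree < ((n : ℕ) : WithBot ℕ) := by
  rw [degree_lt_iff_coeff_zero]
  intro M hM
  rw [pPoly_coeff, if_neg (by omega)]

lemma Mmat_p (n : ℕ) (hn : 1 ≤ n) : Mmat_s11 n (pPoly n) = Vmat n := by
  have hmon := thetaPoly_monic n
  have key : ∀ k : ℕ, k < n → ∀ i : Fin n,
      ((X ^ k * pPoly n) %ₘ thetaPoly n).coeff i = dKL n (n - 1 - (i : ℕ)) k := by
    intro k
    induction k with
    | zero =>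
      intro _ i
      rw [pow_zero, one_mul,
        (modByMonic_eq_self_iff hmon).mpr (by rw [thetaPoly_degree]; exact pPoly_degree_lt n hn),
        pPoly_coeff, if_pos i.isLt]
    | succ k ih =>
      intro hk i
      have hcol : (fun j : Fin n => ((X ^ k * pPoly n) %ₘ thetaPoly n).coeff j)
          = (fun j : Fin n => dKL n (n - 1 - (j : ℕ)) k) := funext fun j => ih (by omega) j
      have hX : (X : Polynomial ℤ) ^ (k + 1) * pPoly n = X * (X ^ k * pPoly n) := by ring
      rw [hX, congrFun (rho_X_mul n hn (X ^ k * pPoly n)) i, hcol, mulVec_companion n hn]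
      simp only []
      rw [show n - 1 - (n - 1) = 0 from by omega, dKL_zero]
      by_cases h : 1 ≤ (i : ℕ)
      · rw [dif_pos h]
        have e1 : n - 1 - ((i : ℕ) - 1) = (n - 1 - (i : ℕ)) + 1 := by
          have := i.isLt; omega
        rw [e1, dKL_rec]
        have e2 : aR n (n - 1 - (i : ℕ) + 1) = thetaCoeff n (i : ℕ) := by
          rw [show n - 1 - (i : ℕ) + 1 = n - (i : ℕ) from by have := i.isLt; omega]
          exact aR_theta n (i : ℕ) (by have := i.isLt; omega)
        rw [e2]
        ring
      · rw [dif_neg h]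
        have hi0 : (i : ℕ) = 0 := by omega
        have e3 : dKL n n k = dKL n (n - 1) (k + 1) + aR n n * bCat k := by
          have := dKL_rec n (n - 1) k
          rwa [show n - 1 + 1 = n from by omega] at this
        rw [dKL_top n k hn (by omega)] at e3
        have e4 : aR n n = thetaCoeff n 0 := by
          have := aR_theta n 0 (by omega)
          rwa [Nat.sub_zero] at this
        rw [hi0, show n - 1 - 0 = n - 1 from by omega, ← e4]
        linarith [e3]
  ext i k
  show ((X ^ (k : ℕ) * pPoly n) %ₘ thetaPoly n).coeff i = dKL n (n - 1 - (i : ℕ)) (k : ℕ)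
  exact key (k : ℕ) k.isLt i

theorem stmt_11 (n : ℕ) (hn : 1 ≤ n) :
    (Vmat n) ^ 2 = (4 : ℤ) • (1 : Matrix (Fin n) (Fin n) ℤ) + companionTheta n := by
  obtain ⟨s, hs⟩ := key_poly n hn
  have h1 : Vmat n ^ 2 = Mmat_s11 n (pPoly n * pPoly n) := by
    rw [← Mmat_p n hn, pow_two, Mmat_mul n hn]
  have hps : pPoly n * pPoly n = (X + 4) + thetaPoly n * s := by
    linear_combination hs
  have h2 : Mmat_s11 n ((X + 4) + thetaPoly n * s) = Mmat_s11 n (X + 4) := by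
    ext i k
    show ((X ^ (k : ℕ) * ((X + 4) + thetaPoly n * s)) %ₘ thetaPoly n).coeff i
      = ((X ^ (k : ℕ) * (X + 4)) %ₘ thetaPoly n).coeff i
    rw [show (X : Polynomial ℤ) ^ (k : ℕ) * ((X + 4) + thetaPoly n * s)
      = X ^ (k : ℕ) * (X + 4) + thetaPoly n * (X ^ (k : ℕ) * s) from by ring, modTheta_add_mul]
  rw [h1, hps, h2]
  have hmon := thetaPoly_monic n
  obtain ⟨m, rfl⟩ : ∃ m, n = m + 1 := ⟨n - 1, by omega⟩
  ext i k
  show ((X ^ (k : ℕ) * (X + 4)) %ₘ thetaPoly (m + 1)).coeff i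
    = ((4 : ℤ) • (1 : Matrix (Fin (m + 1)) (Fin (m + 1)) ℤ) + companionTheta (m + 1)) i k
  have hrhs : ((4 : ℤ) • (1 : Matrix (Fin (m + 1)) (Fin (m + 1)) ℤ) + companionTheta (m + 1)) i k
      = 4 * (if i = k then 1 else 0) + (if (k : ℕ) = m + 1 - 1 then - thetaCoeff (m + 1) i
          else if (i : ℕ) = (k : ℕ) + 1 then 1 else 0) := by
    rw [Matrix.add_apply, Matrix.smul_apply, Matrix.one_apply]
    show (4 : ℤ) • (if i = k then (1 : ℤ) else 0) + _ = _
    rw [smul_eq_mul]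
    rfl
  by_cases hk : (k : ℕ) = m
  · -- last column
    have hsplit : (X : Polynomial ℤ) ^ (k : ℕ) * (X + 4)
        = (X ^ (m + 1) + C 4 * X ^ m - thetaPoly (m + 1)) + thetaPoly (m + 1) * 1 := by
      rw [hk, show (4 : Polynomial ℤ) = C 4 from by norm_num]
      ring
    have hdegg : (X ^ (m + 1) + C 4 * X ^ m - thetaPoly (m + 1) : Polynomial ℤ).degree
        < ((m + 1 : ℕ) : WithBot ℕ) := by
      rw [degree_lt_iff_coeff_zero]
      intro M hM
      rw [coeff_sub, coeff_add, coeff_X_pow, coeff_C_mul, coeff_X_pow, thetaPoly_coeff]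
      rcases Nat.lt_or_ge (m + 1) M with h | h
      · rw [if_neg (by omega), if_neg (by omega), if_neg (by omega)]
        ring
      · have hM1 : M = m + 1 := by omega
        rw [hM1, if_pos rfl, if_neg (by omega), if_pos le_rfl, thetaCoeff_top]
        ring
    rw [hsplit, modTheta_add_mul,
      (modByMonic_eq_self_iff hmon).mpr (by rw [thetaPoly_degree]; exact hdegg),
      coeff_sub, coeff_add, coeff_X_pow, coeff_C_mul, coeff_X_pow, thetaPoly_coeff,
      if_pos (by have := i.isLt; omega : (i : ℕ) ≤ m + 1),
      if_neg (by have := i.isLt; omega : ¬ (i : ℕ) = m + 1), hrhs,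
      if_pos (by omega : (k : ℕ) = m + 1 - 1)]
    simp only [Fin.ext_iff, hk]
    ring
  · -- other columns
    have hlt : (k : ℕ) + 1 < m + 1 := by have := k.isLt; omega
    have hX4 : (X : Polynomial ℤ) ^ (k : ℕ) * (X + 4) = X ^ ((k : ℕ) + 1) + C 4 * X ^ (k : ℕ) := by
      rw [show (4 : Polynomial ℤ) = C 4 from by norm_num]
      ring
    have hdeg : (X ^ ((k : ℕ) + 1) + C 4 * X ^ (k : ℕ) : Polynomial ℤ).degree
        < ((m + 1 : ℕ) : WithBot ℕ) := by
      rw [degree_lt_iff_coeff_zero]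
      intro M hM
      rw [coeff_add, coeff_X_pow, coeff_C_mul, coeff_X_pow, if_neg (by omega), if_neg (by omega)]
      ring
    rw [hX4, (modByMonic_eq_self_iff hmon).mpr (by rw [thetaPoly_degree]; exact hdeg),
      coeff_add, coeff_X_pow, coeff_C_mul, coeff_X_pow, hrhs, if_neg (by omega : ¬ (k : ℕ) = m + 1 - 1)]
    simp only [Fin.ext_iff]
    ring
end
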